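/- Under the action of the symmetric group S_n on labelled red and white trees by relabelling, every orbit contains at least one recursively labelled tree; i.e., for every T ∈ BWTSL(n) there exists a permutation σ ∈ S_n such that the tree obtained from T by replacing each label i by σ(i) is recursively labelled. -/

import Mathlib

open scoped Classical

/- A labelled red and white tree on `{1,…,n}` is encoded by the (laminar) family of the
sets `S(z)` of all labels carried by the subtree rooted at each node `z`; this determines
the tree completely (children of a node are the maximal proper members of the family
below it, its own labels are those not appearing in its children, and the condition that
an unlabelled node has at least two children is automatic). -/

/-- The children of the node `S` in the family `fam`: maximal members strictly below `S`. -/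
def childrenF (fam : Finset (Finset ℕ)) (S : Finset ℕ) : Finset (Finset ℕ) :=
  fam.filter fun T => T ⊂ S ∧ ∀ U ∈ fam, T ⊂ U → ¬ U ⊂ S

/-- The set of labels carried by the node `S` itself. -/
def labelsOf (fam : Finset (Finset ℕ)) (S : Finset ℕ) : Finset ℕ :=
  S \ (childrenF fam S).biUnion id

/-- `fam` encodes a labelled red and white tree on `{1,…,n}` (`fam ∈ BWTSL(n)`). -/
def IsRWTree (n : ℕ) (fam : Finset (Finset ℕ)) : Prop :=
  (∀ S ∈ fam, S.Nonempty ∧ S ⊆ Finset.Icc 1 n) ∧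
  Finset.Icc 1 n ∈ fam ∧
  ∀ S ∈ fam, ∀ T ∈ fam, S ⊆ T ∨ T ⊆ S ∨ Disjoint S T

/-- The tree is recursively labelled: the total label set of every subtree is an
interval of consecutive integers. -/
def IsRecursive (fam : Finset (Finset ℕ)) : Prop :=
  ∀ S ∈ fam, ∃ a b : ℕ, S = Finset.Icc a b

/-- The node `S` is red: it carries no label and all of its children are white. -/
def IsRed (fam : Finset (Finset ℕ)) (S : Finset ℕ) : Prop :=
  labelsOf fam S = ∅ ∧ ∀ T ∈ childrenF fam S, ¬ IsRed fam T
termination_by S.card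
decreasing_by
  rename_i hT
  exact Finset.card_lt_card (Finset.mem_filter.mp hT).2.1

/-- Relabelling of the first tree in `T₁ ∘ₓ T₂` (`n` the arity of `T₂`): labels `j > x`
are shifted by `n - 1` and the label `x` becomes the whole block `{x,…,x+n-1}`. -/
def relabL (x n : ℕ) (T : Finset ℕ) : Finset ℕ :=
  T.biUnion fun j =>
    if j < x then {j} else if j = x then Finset.Icc x (x + n - 1) else {j + n - 1}

/-- Relabelling of the second tree in `T₁ ∘ₓ T₂`: labels are shifted by `x - 1`. -/
def relabR (x : ℕ) (T : Finset ℕ) : Finset ℕ := T.image fun j => x + j - 1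

/-- The composition `T₁ ∘ₓ T₂` of labelled red and white trees (in the laminar-family
encoding), `n` being the arity of `T₂`.  The four cases correspond to the rules
(R1), (R3), (R2) and (W) respectively:  if the root of `T₂` is red then the result is
`T₂` when `T₁` is the single node labelled `x` (R1); the node `z` of `T₁` containing `x`
is deleted and the children of the root of `T₂` are attached to its parent when `z` is a
leaf whose only label is `x` (R3); otherwise the root of `T₂` becomes a new child of `z`
(R2).  If the root of `T₂` is not red, it is merged with `z` (W). -/
noncomputable def rwCompose (n x : ℕ) (fam₁ fam₂ : Finset (Finset ℕ)) :
    Finset (Finset ℕ) :=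
  let B : Finset ℕ := Finset.Icc x (x + n - 1)
  let f₁ := fam₁.image (relabL x n)
  let f₂ := fam₂.image (relabR x)
  if IsRed fam₂ (Finset.Icc 1 n) then
    if fam₁ = {{x}} then f₂
    else if {x} ∈ fam₁ then (f₁ \ {B}) ∪ (f₂ \ {B})
    else f₁ ∪ f₂
  else f₁ ∪ (f₂ \ {B})

/-- The unit: the single node labelled `{1}`. -/
def unitT : Finset (Finset ℕ) := {{1}}
/-- `T_≺`: white root labelled `{1}` with a single white child labelled `{2}`. -/
def Tprec : Finset (Finset ℕ) := {{1, 2}, {2}}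
/-- `T_≻`: white root labelled `{2}` with a single white child labelled `{1}`. -/
def Tsucc : Finset (Finset ℕ) := {{1, 2}, {1}}
/-- `T_∘`: a single white node labelled `{1,2}`. -/
def Tmid : Finset (Finset ℕ) := {{1, 2}}
/-- `T_⊙`: red empty root with two white children labelled `{1}` and `{2}`. -/
def Tdot : Finset (Finset ℕ) := {{1, 2}, {1}, {2}}

/-- Any finset can be mapped injectively onto an interval. -/
lemma exists_bij_interval (A : Finset ℕ) (a : ℕ) :
    ∃ f : ℕ → ℕ, Set.InjOn f A ∧ A.image f = Finset.Ico a (a + A.card) := by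
  classical
  refine ⟨fun x => if h : x ∈ A then a + (A.equivFin ⟨x, h⟩ : Fin A.card) else 0, ?_, ?_⟩
  · intro x hx y hy hxy
    simp only [Finset.mem_coe] at hx hy
    simp only [dif_pos hx, dif_pos hy] at hxy
    have h1 : A.equivFin ⟨x, hx⟩ = A.equivFin ⟨y, hy⟩ := Fin.ext (by omega)
    exact congrArg Subtype.val (A.equivFin.injective h1)
  · apply Finset.eq_of_subset_of_card_le
    · intro y hy
      simp only [Finset.mem_image] at hy
      obtain ⟨x, hx, rfl⟩ := hy
      rw [dif_pos hx]
      have := (A.equivFin ⟨x, hx⟩).isLt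
      simp only [Finset.mem_Ico]
      omega
    · rw [Nat.card_Ico, Finset.card_image_of_injOn]
      · omega
      · intro x hx y hy hxy
        simp only [Finset.mem_coe] at hx hy
        simp only [dif_pos hx, dif_pos hy] at hxy
        have h1 : A.equivFin ⟨x, hx⟩ = A.equivFin ⟨y, hy⟩ := Fin.ext (by omega)
        exact congrArg Subtype.val (A.equivFin.injective h1)

/-- Key lemma: a laminar family of nonempty subsets of `A` can be made a family of
intervals by an injection mapping `A` onto an interval. -/
lemma laminar_key : ∀ N : ℕ, ∀ A : Finset ℕ, A.card ≤ N →
    ∀ fam : Finset (Finset ℕ),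
    (∀ S ∈ fam, S.Nonempty ∧ S ⊆ A) →
    (∀ S ∈ fam, ∀ T ∈ fam, S ⊆ T ∨ T ⊆ S ∨ Disjoint S T) →
    ∀ a : ℕ, ∃ f : ℕ → ℕ, Set.InjOn f A ∧ A.image f = Finset.Ico a (a + A.card) ∧
      ∀ S ∈ fam, ∃ c d, S.image f = Finset.Ico c d := by
  intro N
  induction N with
  | zero =>
    intro A hA fam hsub _ a
    have hA0 : A = ∅ := Finset.card_eq_zero.mp (Nat.le_zero.mp hA)
    subst hA0
    refine ⟨id, by simp, by simp, ?_⟩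
    intro S hS
    exact absurd ((hsub S hS).2 ((hsub S hS).1.choose_spec)) (by simp)
  | succ N ih =>
    intro A hA fam hsub hlam a
    by_cases hP : ∀ S ∈ fam, S = A
    · obtain ⟨f, hinj, himg⟩ := exists_bij_interval A a
      exact ⟨f, hinj, himg, fun S hS => ⟨a, a + A.card, by rw [hP S hS, himg]⟩⟩
    · push_neg at hP
      obtain ⟨S₀, hS₀, hS₀A⟩ := hP
      have hPne : (fam.filter (fun T => T ≠ A)).Nonempty :=
        ⟨S₀, Finset.mem_filter.mpr ⟨hS₀, hS₀A⟩⟩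
      obtain ⟨M, hMmem, hMmax⟩ : ∃ M ∈ fam.filter (fun T => T ≠ A),
          ∀ x ∈ fam.filter (fun T => T ≠ A), ¬ M < x := by
        obtain ⟨M, hM⟩ := Finset.exists_maximal hPne
        exact ⟨M, hM.1, fun x hx hlt => lt_irrefl M (lt_of_lt_of_le hlt (hM.2 hx hlt.le))⟩
      rw [Finset.mem_filter] at hMmem
      obtain ⟨hMfam, hMA⟩ := hMmem
      have hMsubA : M ⊆ A := (hsub M hMfam).2
      have hMssA : M ⊂ A := ⟨hMsubA, fun h => hMA (Finset.Subset.antisymm hMsubA h)⟩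
      have hMne : M.Nonempty := (hsub M hMfam).1
      -- every member of fam is A, inside M, or disjoint from M
      have htri : ∀ S ∈ fam, S = A ∨ S ⊆ M ∨ Disjoint S M := by
        intro S hS
        by_cases hSA : S = A
        · exact Or.inl hSA
        · rcases hlam S hS M hMfam with h1 | h1 | h1
          · exact Or.inr (Or.inl h1)
          · by_cases hSM : S = M
            · exact Or.inr (Or.inl hSM.le)
            · exact absurd (lt_of_le_of_ne h1 fun h2 => hSM h2.symm)
                (hMmax S (Finset.mem_filter.mpr ⟨hS, hSA⟩))
          · exact Or.inr (Or.inr h1)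
      have hMpos : 0 < M.card := Finset.card_pos.mpr hMne
      have hcardM : M.card < A.card := Finset.card_lt_card hMssA
      have hcardsd : (A \ M).card + M.card = A.card :=
        Finset.card_sdiff_add_card_eq_card hMsubA
      -- inner family
      obtain ⟨f₁, hinj₁, himg₁, hint₁⟩ :=
        ih M (by omega) (fam.filter (· ⊆ M))
          (fun S hS => ⟨(hsub S (Finset.mem_filter.mp hS).1).1, (Finset.mem_filter.mp hS).2⟩)
          (fun S hS T hT => hlam S (Finset.mem_filter.mp hS).1 T (Finset.mem_filter.mp hT).1)
          a
      -- outer family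
      obtain ⟨f₂, hinj₂, himg₂, hint₂⟩ :=
        ih (A \ M) (by omega) (fam.filter (fun S => Disjoint S M))
          (fun S hS => ⟨(hsub S (Finset.mem_filter.mp hS).1).1,
            fun x hx => Finset.mem_sdiff.mpr ⟨(hsub S (Finset.mem_filter.mp hS).1).2 hx,
              fun hxM => Finset.disjoint_left.mp (Finset.mem_filter.mp hS).2 hx hxM⟩⟩)
          (fun S hS T hT => hlam S (Finset.mem_filter.mp hS).1 T (Finset.mem_filter.mp hT).1)
          (a + M.card)
      classical
      refine ⟨fun x => if x ∈ M then f₁ x else f₂ x, ?_, ?_, ?_⟩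
      · -- injectivity
        intro x hx y hy hxy
        simp only [Finset.mem_coe] at hx hy
        by_cases hxM : x ∈ M <;> by_cases hyM : y ∈ M
        · simp only [if_pos hxM, if_pos hyM] at hxy; exact hinj₁ hxM hyM hxy
        · exfalso
          simp only [if_pos hxM, if_neg hyM] at hxy
          have h1 : f₁ x ∈ Finset.Ico a (a + M.card) := himg₁ ▸ Finset.mem_image_of_mem f₁ hxM
          have h2 : f₂ y ∈ Finset.Ico (a + M.card) (a + M.card + (A \ M).card) :=
            himg₂ ▸ Finset.mem_image_of_mem f₂ (Finset.mem_sdiff.mpr ⟨hy, hyM⟩)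
          rw [Finset.mem_Ico] at h1 h2
          omega
        · exfalso
          simp only [if_neg hxM, if_pos hyM] at hxy
          have h1 : f₁ y ∈ Finset.Ico a (a + M.card) := himg₁ ▸ Finset.mem_image_of_mem f₁ hyM
          have h2 : f₂ x ∈ Finset.Ico (a + M.card) (a + M.card + (A \ M).card) :=
            himg₂ ▸ Finset.mem_image_of_mem f₂ (Finset.mem_sdiff.mpr ⟨hx, hxM⟩)
          rw [Finset.mem_Ico] at h1 h2
          omega
        · simp only [if_neg hxM, if_neg hyM] at hxy
          exact hinj₂ (Finset.mem_coe.mpr (Finset.mem_sdiff.mpr ⟨hx, hxM⟩))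
            (Finset.mem_coe.mpr (Finset.mem_sdiff.mpr ⟨hy, hyM⟩)) hxy
      · -- image of A
        have hsplit : (A.image fun x => if x ∈ M then f₁ x else f₂ x) =
            (M.image fun x => if x ∈ M then f₁ x else f₂ x) ∪
            ((A \ M).image fun x => if x ∈ M then f₁ x else f₂ x) := by
          rw [← Finset.image_union, Finset.union_sdiff_of_subset hMsubA]
        rw [hsplit]
        have e1 : (M.image fun x => if x ∈ M then f₁ x else f₂ x) = M.image f₁ :=
          Finset.image_congr (fun x hx => if_pos hx)
        have e2 : ((A \ M).image fun x => if x ∈ M then f₁ x else f₂ x) = (A \ M).image f₂ :=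
          Finset.image_congr (fun x hx => if_neg (Finset.mem_sdiff.mp hx).2)
        rw [e1, e2, himg₁, himg₂, Finset.Ico_union_Ico_eq_Ico (by omega) (by omega)]
        congr 1
        omega
      · -- intervals
        intro S hS
        rcases htri S hS with rfl | hSM | hSd
        · refine ⟨a, a + S.card, ?_⟩
          have hsplit : (S.image fun x => if x ∈ M then f₁ x else f₂ x) =
            (M.image fun x => if x ∈ M then f₁ x else f₂ x) ∪
            ((S \ M).image fun x => if x ∈ M then f₁ x else f₂ x) := by
            rw [← Finset.image_union, Finset.union_sdiff_of_subset hMsubA]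
          rw [hsplit]
          have e1 : (M.image fun x => if x ∈ M then f₁ x else f₂ x) = M.image f₁ :=
            Finset.image_congr (fun x hx => if_pos hx)
          have e2 : ((S \ M).image fun x => if x ∈ M then f₁ x else f₂ x) = (S \ M).image f₂ :=
            Finset.image_congr (fun x hx => if_neg (Finset.mem_sdiff.mp hx).2)
          rw [e1, e2, himg₁, himg₂, Finset.Ico_union_Ico_eq_Ico (by omega) (by omega)]
          congr 1
          omega
        · have e1 : (S.image fun x => if x ∈ M then f₁ x else f₂ x) = S.image f₁ :=
            Finset.image_congr (fun x hx => if_pos (hSM hx))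
          rw [e1]
          exact hint₁ S (Finset.mem_filter.mpr ⟨hS, hSM⟩)
        · have e2 : (S.image fun x => if x ∈ M then f₁ x else f₂ x) = S.image f₂ :=
            Finset.image_congr (fun x hx => if_neg (fun hxM => Finset.disjoint_left.mp hSd hx hxM))
          rw [e2]
          exact hint₂ S (Finset.mem_filter.mpr ⟨hS, hSd⟩)

/-- Every orbit of the symmetric group acting on labelled red and
white trees by relabelling contains at least one recursively labelled tree. -/
theorem exists_recursive_in_orbit (n : ℕ) (fam : Finset (Finset ℕ))
    (h : IsRWTree n fam) :
    ∃ σ : Equiv.Perm ℕ, (∀ j ∉ Finset.Icc 1 n, σ j = j) ∧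
      IsRecursive (fam.image fun S => S.image fun j => σ j) := by
  classical
  obtain ⟨f, hinj, himg, hint⟩ :=
    laminar_key n (Finset.Icc 1 n) (by simp [Nat.card_Icc]) fam h.1 h.2.2 1
  have hcard : (Finset.Icc 1 n).card = n := by simp [Nat.card_Icc]
  rw [hcard] at himg
  have himg' : (Finset.Icc 1 n).image f = Finset.Icc 1 n := by
    rw [himg]
    rw [show 1 + n = n + 1 by omega, Finset.Ico_add_one_right_eq_Icc]
  have hmaps : ∀ x ∈ Finset.Icc 1 n, f x ∈ Finset.Icc 1 n := by
    intro x hx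
    have : f x ∈ (Finset.Icc 1 n).image f := Finset.mem_image_of_mem f hx
    rwa [himg'] at this
  have hbij : Function.Bijective
      (fun x : {y // y ∈ Finset.Icc 1 n} =>
        (⟨f x, hmaps x x.2⟩ : {y // y ∈ Finset.Icc 1 n})) := by
    rw [Fintype.bijective_iff_injective_and_card]
    refine ⟨fun x y hxy => Subtype.ext (hinj (Finset.mem_coe.mpr x.2) (Finset.mem_coe.mpr y.2)
      (congrArg Subtype.val hxy)), rfl⟩
  let e : {y // y ∈ Finset.Icc 1 n} ≃ {y // y ∈ Finset.Icc 1 n} := Equiv.ofBijective _ hbij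
  refine ⟨Equiv.Perm.extendDomain e (Equiv.refl _),
    fun j hj => Equiv.Perm.extendDomain_apply_not_subtype e (Equiv.refl _) hj, ?_⟩
  have hσ : ∀ x ∈ Finset.Icc 1 n,
      (Equiv.Perm.extendDomain e (Equiv.refl _)) x = f x := by
    intro x hx
    have h2 := Equiv.Perm.extendDomain_apply_subtype e
      (Equiv.refl {y // y ∈ Finset.Icc 1 n}) hx
    simpa [e] using h2
  intro S' hS'
  simp only [Finset.mem_image] at hS'
  obtain ⟨S, hS, rfl⟩ := hS'
  have hSsub : S ⊆ Finset.Icc 1 n := (h.1 S hS).2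
  have heq : (S.image fun j => (Equiv.Perm.extendDomain e (Equiv.refl _)) j) = S.image f :=
    Finset.image_congr (fun x hx => hσ x (hSsub hx))
  obtain ⟨c, d, hcd⟩ := hint S hS
  have hne : (S.image f).Nonempty := (h.1 S hS).1.image f
  rw [hcd] at hne
  have hcd' : c < d := by
    by_contra hcon
    simp [Finset.Ico_eq_empty (fun h' => hcon h')] at hne
  have hIcoIcc : Finset.Ico c d = Finset.Icc c (d - 1) := by
    rw [← Finset.Ico_add_one_right_eq_Icc]
    congr 1
    omega
  exact ⟨c, d - 1, by rw [heq, hcd, hIcoIcc]⟩
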